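/- Let R be an object unital G-graded ring and M a graded left R-module. If the underlying ungraded module U(M) is semisimple as an R-module, then M is semisimple in the graded category (every graded submodule of M is a graded direct summand). -/

import Mathlib

open CategoryTheory

/-- The arrows of a groupoid, bundled with their endpoints. -/
abbrev GArrow (G : Type*) [Groupoid G] := Σ a b : G, a ⟶ b

namespace GArrow

variable {G : Type*} [Groupoid G]

/-- The unit arrow at an object. -/
def unit (a : G) : GArrow G := ⟨a, a, 𝟙 a⟩

/-- The inverse arrow `σ⁻¹`. -/
def ginv (σ : GArrow G) : GArrow G := ⟨σ.2.1, σ.1, Groupoid.inv σ.2.2⟩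

/-- `Composable σ τ` means `d(σ) = r(τ)`, i.e. the product `στ` is defined. -/
def Composable (σ τ : GArrow G) : Prop := σ.1 = τ.2.1

/-- The product `στ` when `d(σ) = r(τ)`. -/
def comp (σ τ : GArrow G) (h : Composable σ τ) : GArrow G :=
  ⟨τ.1, σ.2.1, τ.2.2 ≫ eqToHom h.symm ≫ σ.2.2⟩

/-- The unit space `G₀`, as a set of arrows. -/
def GUnits (G : Type*) [Groupoid G] : Set (GArrow G) := Set.range unit

/-- The product of two sets of arrows: `Σ * Σ' = { στ : σ ∈ Σ, τ ∈ Σ', d(σ) = r(τ) }`. -/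
def setMul (A B : Set (GArrow G)) : Set (GArrow G) :=
  {ρ | ∃ σ ∈ A, ∃ τ ∈ B, ∃ h : Composable σ τ, ρ = comp σ τ h}

end GArrow

/-- An object unital `G`-grading on an associative, not necessarily unital, ring `R`:
`R = ⊕_{σ ∈ G} R_σ`, `R_σ R_τ ⊆ R_{στ}` for composable pairs, `R_σ R_τ = 0` otherwise,
each `R_e` (`e ∈ G₀`) is unital with identity `u e`, and
`1_{R_{r(σ)}} r = r 1_{R_{d(σ)}} = r` for every `r ∈ R_σ`. -/
structure OUGrading (G : Type*) [Groupoid G] (R : Type*) [NonUnitalRing R] where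
  component : GArrow G → AddSubgroup R
  sup_eq_top : (⨆ σ : GArrow G, component σ) = ⊤
  indep : iSupIndep component
  mul_mem : ∀ (σ τ : GArrow G) (h : GArrow.Composable σ τ), ∀ r ∈ component σ,
    ∀ s ∈ component τ, r * s ∈ component (GArrow.comp σ τ h)
  mul_eq_zero : ∀ (σ τ : GArrow G), ¬ GArrow.Composable σ τ → ∀ r ∈ component σ,
    ∀ s ∈ component τ, r * s = 0
  /-- The identity of the unital ring `R_e`, for each object (unit) `e`. -/
  u : G → R
  u_mem : ∀ a : G, u a ∈ component (GArrow.unit a)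
  u_left : ∀ σ : GArrow G, ∀ r ∈ component σ, u σ.2.1 * r = r
  u_right : ∀ σ : GArrow G, ∀ r ∈ component σ, r * u σ.1 = r

/-- The axioms of a left module over a not necessarily unital ring. -/
structure NUModule (R M : Type*) [NonUnitalRing R] [AddCommGroup M] [SMul R M] : Prop where
  smul_add : ∀ (r : R) (m n : M), r • (m + n) = r • m + r • n
  add_smul : ∀ (r s : R) (m : M), (r + s) • m = r • m + s • m
  mul_smul : ∀ (r s : R) (m : M), (r * s) • m = r • (s • m)

/-- A `G`-graded left module over a ring `R` with object unital `G`-grading `gr`. -/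
structure GrModule {G : Type*} [Groupoid G] {R : Type*} [NonUnitalRing R]
    (gr : OUGrading G R) (M : Type*) [AddCommGroup M] [SMul R M] where
  smul_add : ∀ (r : R) (m n : M), r • (m + n) = r • m + r • n
  add_smul : ∀ (r s : R) (m : M), (r + s) • m = r • m + s • m
  mul_smul : ∀ (r s : R) (m : M), (r * s) • m = r • (s • m)
  component : GArrow G → AddSubgroup M
  sup_eq_top : (⨆ σ : GArrow G, component σ) = ⊤
  indep : iSupIndep component
  smul_mem : ∀ (σ τ : GArrow G) (h : GArrow.Composable σ τ), ∀ r ∈ gr.component σ,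
    ∀ m ∈ component τ, r • m ∈ component (GArrow.comp σ τ h)
  smul_eq_zero : ∀ (σ τ : GArrow G), ¬ GArrow.Composable σ τ → ∀ r ∈ gr.component σ,
    ∀ m ∈ component τ, r • m = 0

/-- A graded module is graded unital if `1_{R_{r(σ)}} • m = m` for all homogeneous `m`
of degree `σ`. -/
def GrModule.IsUnital {G : Type*} [Groupoid G] {R : Type*} [NonUnitalRing R]
    {gr : OUGrading G R} {M : Type*} [AddCommGroup M] [SMul R M]
    (gm : GrModule gr M) : Prop :=
  ∀ σ : GArrow G, ∀ m ∈ gm.component σ, gr.u σ.2.1 • m = m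

/-- A graded homomorphism between graded modules with homogeneous components `cM`, `cN`. -/
def IsGrHom {G : Type*} [Groupoid G] {R : Type*} [NonUnitalRing R]
    {M N : Type*} [AddCommGroup M] [AddCommGroup N] [SMul R M] [SMul R N]
    (cM : GArrow G → AddSubgroup M) (cN : GArrow G → AddSubgroup N) (f : M → N) : Prop :=
  (∀ x y : M, f (x + y) = f x + f y) ∧ (∀ (r : R) (x : M), f (r • x) = r • f x) ∧
    (∀ σ : GArrow G, ∀ x ∈ cM σ, f x ∈ cN σ)

/-- A graded submodule: an additive subgroup closed under the `R`-action which is the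
sum of its homogeneous components. -/
def IsGrSubmodule {G : Type*} [Groupoid G] {R : Type*} [NonUnitalRing R]
    {gr : OUGrading G R} {M : Type*} [AddCommGroup M] [SMul R M]
    (gm : GrModule gr M) (N : AddSubgroup M) : Prop :=
  (∀ (r : R), ∀ m ∈ N, r • m ∈ N) ∧ N = ⨆ σ : GArrow G, (N ⊓ gm.component σ)

open Classical in
/-- The homogeneous component of degree `τ` of the `σ'`-suspension `R(σ')`:
`R(σ')_τ = R_{τσ'}` if `(τ, σ')` is composable and `{0}` otherwise. -/
noncomputable def suspComponent {G : Type*} [Groupoid G] {R : Type*} [NonUnitalRing R]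
    (gr : OUGrading G R) (σ' τ : GArrow G) : AddSubgroup R :=
  if h : GArrow.Composable τ σ' then gr.component (GArrow.comp τ σ' h) else ⊥

/-- The `σ'`-suspension `R(σ') = ⊕_τ R(σ')_τ` of `R`, as an additive subgroup of `R`. -/
noncomputable def suspension {G : Type*} [Groupoid G] {R : Type*} [NonUnitalRing R]
    (gr : OUGrading G R) (σ' : GArrow G) : AddSubgroup R :=
  ⨆ τ : GArrow G, suspComponent gr σ' τ

/-- A graded homomorphism from a graded left ideal `S` of `R` (with homogeneous
components `cS`) to a graded module with components `cN`. -/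
def IsGrHomOn {G : Type*} [Groupoid G] {R N : Type*} [NonUnitalRing R]
    [AddCommGroup N] [SMul R N] {S : AddSubgroup R}
    (cS : GArrow G → AddSubgroup R) (cN : GArrow G → AddSubgroup N) (f : ↥S → N) : Prop :=
  (∀ x y : ↥S, f (x + y) = f x + f y) ∧
  (∀ (r : R) (x y : ↥S), (y : R) = r * (x : R) → f y = r • f x) ∧
  (∀ τ : GArrow G, ∀ x : ↥S, (x : R) ∈ cS τ → f x ∈ cN τ)

/-- A graded module is free by suspension if it is the internal direct sum of graded
submodules, each gradedly isomorphic to a suspension `R(σᵢ)` of `R`. -/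
noncomputable def FreeBySuspension {G : Type*} [Groupoid G] {R : Type*} [NonUnitalRing R]
    {gr : OUGrading G R} {M : Type*} [AddCommGroup M] [SMul R M]
    (gm : GrModule gr M) : Prop :=
  ∃ (ι : Type*) (σs : ι → GArrow G) (f : ∀ i : ι, ↥(suspension gr (σs i)) → M),
    (∀ i : ι, IsGrHomOn (suspComponent gr (σs i)) gm.component (f i)) ∧
    (∀ i : ι, Function.Injective (f i)) ∧
    iSupIndep (fun i : ι => AddSubgroup.closure (Set.range (f i))) ∧
    (⨆ i : ι, AddSubgroup.closure (Set.range (f i))) = ⊤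

/-- The set of graded homomorphisms `R → N` of degree `σ`. -/
def HomDeg {G : Type*} [Groupoid G] {R N : Type*} [NonUnitalRing R]
    [AddCommGroup N] [SMul R N] (gr : OUGrading G R)
    (cN : GArrow G → AddSubgroup N) (σ : GArrow G) : Set (R → N) :=
  {f | (∀ x y : R, f (x + y) = f x + f y) ∧ (∀ r x : R, f (r * x) = r • f x) ∧
    (∀ (τ : GArrow G) (h : GArrow.Composable τ σ), ∀ x ∈ gr.component τ,
        f x ∈ cN (GArrow.comp τ σ h)) ∧
    (∀ τ : GArrow G, ¬ GArrow.Composable τ σ → ∀ x ∈ gr.component τ, f x = 0)}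

/-- `HOM_R(R, N) = ⊕_σ HOM_R(R, N)_σ`, the additive group generated by the graded
homomorphisms of some degree. -/
def HOM {G : Type*} [Groupoid G] {R N : Type*} [NonUnitalRing R]
    [AddCommGroup N] [SMul R N] (gr : OUGrading G R)
    (cN : GArrow G → AddSubgroup N) : AddSubgroup (R → N) :=
  AddSubgroup.closure (⋃ σ : GArrow G, HomDeg gr cN σ)

/-- The left `R`-action `(r · f)(x) = f(x r)` on maps `R → N`. -/
def rAct {R N : Type*} [NonUnitalRing R] (r : R) (f : R → N) : R → N :=
  fun x => f (x * r)

/-- `R · HOM_R(R, N)`, the unitary part of `HOM_R(R, N)` under the action `rAct`. -/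
def RHOM {G : Type*} [Groupoid G] {R N : Type*} [NonUnitalRing R]
    [AddCommGroup N] [SMul R N] (gr : OUGrading G R)
    (cN : GArrow G → AddSubgroup N) : AddSubgroup (R → N) :=
  AddSubgroup.closure {g | ∃ (r : R), ∃ f ∈ HOM gr cN, g = rAct r f}

/-- A bundled graded unital left `R`-module. -/
structure GrUMod {G : Type*} [Groupoid G] {R : Type*} [NonUnitalRing R]
    (gr : OUGrading G R) where
  carrier : Type*
  [acg : AddCommGroup carrier]
  [sm : SMul R carrier]
  str : GrModule gr carrier
  unital : str.IsUnital

attribute [instance] GrUMod.acg GrUMod.sm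

section StmtAux

open GArrow

/-- `comp ρ · ` is injective in its second argument. -/
lemma GArrow.comp_right_inj {G : Type*} [Groupoid G] {ρ τ σ : GArrow G}
    (hτ : Composable ρ τ) (hσ : Composable ρ σ)
    (h : comp ρ τ hτ = comp ρ σ hσ) : τ = σ := by
  obtain ⟨a, b, f⟩ := ρ
  obtain ⟨c, d, g⟩ := τ
  obtain ⟨c', d', g'⟩ := σ
  obtain rfl : a = d := hτ
  obtain rfl : a = d' := hσ
  simp only [comp, eqToHom_refl, CategoryTheory.Category.id_comp] at h
  obtain ⟨rfl, h2⟩ := Sigma.mk.inj_iff.mp h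
  obtain ⟨_, h3⟩ := Sigma.mk.inj_iff.mp (eq_of_heq h2)
  have h4 : g = g' := by
    have := eq_of_heq h3
    rwa [CategoryTheory.cancel_mono] at this
  subst h4
  rfl

end StmtAux

/-- If the underlying ungraded module `U(M)` is semisimple (every
`R`-submodule is a direct summand), then `M` is semisimple in the graded category:
every graded submodule has a graded complement. -/
theorem stmt19 {G R M : Type*} [Groupoid G] [NonUnitalRing R] [AddCommGroup M] [SMul R M]
    (gr : OUGrading G R) (gm : GrModule gr M)
    (hss : ∀ N : AddSubgroup M, (∀ (r : R), ∀ m ∈ N, r • m ∈ N) →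
      ∃ C : AddSubgroup M, (∀ (r : R), ∀ m ∈ C, r • m ∈ C) ∧ N ⊓ C = ⊥ ∧ N ⊔ C = ⊤) :
    ∀ N : AddSubgroup M, IsGrSubmodule gm N →
      ∃ C : AddSubgroup M, IsGrSubmodule gm C ∧ N ⊓ C = ⊥ ∧ N ⊔ C = ⊤ := by
  classical
  intro N hN
  obtain ⟨C₀, hC₀r, hinfNC, hsupNC⟩ := hss N hN.1
  -- trivial smul facts
  have smul_zero' : ∀ r : R, r • (0 : M) = 0 := by
    intro r
    have h := gm.smul_add r 0 0
    rw [add_zero] at h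
    have h2 : r • (0 : M) + r • (0 : M) = r • (0 : M) + 0 := by rw [add_zero]; exact h.symm
    exact add_left_cancel h2
  have zero_smul' : ∀ m : M, (0 : R) • m = 0 := by
    intro m
    have h := gm.add_smul 0 0 m
    rw [add_zero] at h
    have h2 : (0 : R) • m + (0 : R) • m = (0 : R) • m + 0 := by rw [add_zero]; exact h.symm
    exact add_left_cancel h2
  -- the internal direct sum decomposition of `M` into homogeneous components
  set c : GArrow G → Submodule ℤ M := fun σ => AddSubgroup.toIntSubmodule (gm.component σ)
    with hc
  have hmemc : ∀ (σ : GArrow G) (x : M), x ∈ c σ ↔ x ∈ gm.component σ := fun _ _ => Iff.rfl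
  have hindep : iSupIndep c := gm.indep.map_orderIso AddSubgroup.toIntSubmodule
  have hsupc : (⨆ σ, c σ) = ⊤ := by
    rw [hc, ← map_iSup (AddSubgroup.toIntSubmodule (M := M)), gm.sup_eq_top]
    rfl
  have hint : DirectSum.IsInternal c :=
    (DirectSum.isInternal_submodule_iff_iSupIndep_and_iSup_eq_top c).mpr ⟨hindep, hsupc⟩
  set e : DirectSum (GArrow G) (fun σ => c σ) ≃ₗ[ℤ] M :=
    LinearEquiv.ofBijective (DirectSum.coeLinearMap c) hint with he
  -- the projections onto the homogeneous components
  set p : GArrow G → M → M := fun σ m => ((e.symm m) σ : M) with hp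
  have hp_add : ∀ (σ : GArrow G) (x y : M), p σ (x + y) = p σ x + p σ y := by
    intro σ x y; simp [hp, map_add]
  have hp_zero : ∀ σ : GArrow G, p σ 0 = 0 := by intro σ; simp [hp]
  have hp_mem : ∀ (σ : GArrow G) (m : M), p σ m ∈ gm.component σ := fun σ m =>
    ((e.symm m) σ).2
  have hp_eq : ∀ (σ : GArrow G) (x : M), x ∈ gm.component σ → p σ x = x := by
    intro σ x hx
    show ((e.symm x) σ : M) = x
    rw [he, hint.ofBijective_coeLinearMap_of_mem ((hmemc σ x).mpr hx)]
  have hp_ne : ∀ (σ τ : GArrow G) (x : M), x ∈ gm.component τ → τ ≠ σ → p σ x = 0 := by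
    intro σ τ x hx hne
    show ((e.symm x) σ : M) = 0
    rw [he, hint.ofBijective_coeLinearMap_of_mem_ne hne ((hmemc τ x).mpr hx)]
    rfl
  -- every element is the (finite) sum of its homogeneous components
  have hp_sum : ∀ m : M, ∑ σ ∈ (e.symm m).support, p σ m = m := by
    intro m
    have h1 : ∀ σ : GArrow G, p σ m = e (DirectSum.of _ σ ((e.symm m) σ)) := by
      intro σ
      show ((e.symm m) σ : M) = _
      rw [he]
      exact (DirectSum.coeLinearMap_of c σ _).symm
    calc ∑ σ ∈ (e.symm m).support, p σ m
        = ∑ σ ∈ (e.symm m).support, e (DirectSum.of _ σ ((e.symm m) σ)) :=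
          Finset.sum_congr rfl fun σ _ => h1 σ
      _ = e (∑ σ ∈ (e.symm m).support, DirectSum.of _ σ ((e.symm m) σ)) :=
          (map_sum e (fun σ => DirectSum.of _ σ ((e.symm m) σ)) (e.symm m).support).symm
      _ = e (e.symm m) := by rw [DirectSum.sum_support_of]
      _ = m := e.apply_symm_apply m
  -- a membership induction principle over homogeneous elements
  have hind : ∀ (P : M → Prop), (∀ σ : GArrow G, ∀ x ∈ gm.component σ, P x) → P 0 →
      (∀ x y, P x → P y → P (x + y)) → ∀ m : M, P m := by
    intro P hhom h0 hadd m
    have hm : m ∈ ⨆ σ : GArrow G, gm.component σ := by rw [gm.sup_eq_top]; trivial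
    exact AddSubgroup.iSup_induction (x := m) _ hm hhom h0 hadd
  -- similar induction principle on the ring side
  have hindR : ∀ (P : R → Prop), (∀ ρ : GArrow G, ∀ r ∈ gr.component ρ, P r) → P 0 →
      (∀ r s, P r → P s → P (r + s)) → ∀ r : R, P r := by
    intro P hhom h0 hadd r
    have hr : r ∈ ⨆ ρ : GArrow G, gr.component ρ := by rw [gr.sup_eq_top]; trivial
    exact AddSubgroup.iSup_induction (x := r) _ hr hhom h0 hadd
  -- key lemma: projections interact with homogeneous scalars
  have hp_smul : ∀ (ρ σ : GArrow G) (h : GArrow.Composable ρ σ) (r : R),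
      r ∈ gr.component ρ → ∀ x : M, p (GArrow.comp ρ σ h) (r • x) = r • p σ x := by
    intro ρ σ h r hr
    refine hind _ ?_ ?_ ?_
    · intro τ x hx
      by_cases hτσ : τ = σ
      · subst hτσ
        rw [hp_eq _ _ hx, hp_eq _ _ (gm.smul_mem ρ τ h r hr x hx)]
      · rw [hp_ne _ _ _ hx hτσ, smul_zero']
        by_cases hcomp : GArrow.Composable ρ τ
        · refine hp_ne _ _ _ (gm.smul_mem ρ τ hcomp r hr x hx) ?_
          intro habs
          exact hτσ (GArrow.comp_right_inj hcomp h habs)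
        · rw [gm.smul_eq_zero ρ τ hcomp r hr x hx, hp_zero]
    · rw [smul_zero', hp_zero, hp_zero, smul_zero']
    · intro x y hx hy
      rw [gm.smul_add, hp_add, hx, hy, ← gm.smul_add, hp_add, gm.smul_add]
  -- the ungraded complement gives a projection onto `N`
  set N' : Submodule ℤ M := AddSubgroup.toIntSubmodule N with hN'
  set C' : Submodule ℤ M := AddSubgroup.toIntSubmodule C₀ with hC'
  have hcompl : IsCompl N' C' := by
    constructor
    · rw [disjoint_iff, hN', hC', ← map_inf, hinfNC]; rfl
    · rw [codisjoint_iff, hN', hC', ← map_sup, hsupNC]; rfl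
  set π : M → M := fun m => (N'.linearProjOfIsCompl C' hcompl m : M) with hπ
  have hπ_add : ∀ x y : M, π (x + y) = π x + π y := by intro x y; simp [hπ, map_add]
  have hπ_memN : ∀ m : M, π m ∈ N := fun m => (N'.linearProjOfIsCompl C' hcompl m).2
  have hπ_left : ∀ m ∈ N, π m = m := by
    intro m hm
    exact congrArg Subtype.val (Submodule.linearProjOfIsCompl_apply_left hcompl ⟨m, hm⟩)
  have hπ_right : ∀ m ∈ C₀, π m = 0 := by
    intro m hm
    exact congrArg Subtype.val (Submodule.linearProjOfIsCompl_apply_right hcompl ⟨m, hm⟩)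
  have hπ_smul : ∀ (r : R) (m : M), π (r • m) = r • π m := by
    intro r m
    have hm : m ∈ N ⊔ C₀ := by rw [hsupNC]; trivial
    obtain ⟨n, hn, cc, hcc, rfl⟩ := AddSubgroup.mem_sup.mp hm
    rw [gm.smul_add, hπ_add, hπ_left (r • n) (hN.1 r n hn), hπ_right (r • cc) (hC₀r r cc hcc),
      add_zero, hπ_add, hπ_left n hn, hπ_right cc hcc, add_zero]
  -- the graded part of the projection
  set pt : M → M := fun m => ∑ σ ∈ (e.symm m).support, p σ (π (p σ m)) with hpt
  have hpt_hom : ∀ (σ : GArrow G) (x : M), x ∈ gm.component σ → pt x = p σ (π x) := by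
    intro σ x hx
    by_cases hx0 : x = 0
    · subst hx0
      have : π (0 : M) = 0 := by rw [hπ]; simp
      simp [hpt, this, hp_zero]
    · have hsupp : (e.symm x).support = {σ} := by
        have hof : e.symm x = DirectSum.of _ σ (⟨x, hx⟩ : c σ) := by
          apply e.injective
          rw [LinearEquiv.apply_symm_apply, he]
          exact (DirectSum.coeLinearMap_of c σ (⟨x, hx⟩ : c σ)).symm
        rw [hof]
        exact DirectSum.support_of _ _ (by simp [Subtype.ext_iff, hx0])
      show ∑ τ ∈ (e.symm x).support, p τ (π (p τ x)) = p σ (π x)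
      rw [hsupp, Finset.sum_singleton, hp_eq _ _ hx]
  have hpt_add : ∀ x y : M, pt (x + y) = pt x + pt y := by
    intro x y
    have key : ∀ (s : Finset (GArrow G)) (m : M), (e.symm m).support ⊆ s →
        pt m = ∑ σ ∈ s, p σ (π (p σ m)) := by
      intro s m hs
      show ∑ σ ∈ (e.symm m).support, p σ (π (p σ m)) = ∑ σ ∈ s, p σ (π (p σ m))
      refine Finset.sum_subset hs fun σ _ hσ => ?_
      have : p σ m = 0 := by
        have h0 : (e.symm m) σ = 0 := DFinsupp.notMem_support_iff.mp hσ
        show ((e.symm m) σ : M) = 0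
        rw [h0]; rfl
      rw [this]
      have : π (0 : M) = 0 := by rw [hπ]; simp
      rw [this, hp_zero]
    set s := (e.symm x).support ∪ (e.symm y).support ∪ (e.symm (x + y)).support with hs
    have hx1 : (e.symm x).support ⊆ s := by
      rw [hs]; intro a ha; exact Finset.mem_union_left _ (Finset.mem_union_left _ ha)
    have hy1 : (e.symm y).support ⊆ s := by
      rw [hs]; intro a ha; exact Finset.mem_union_left _ (Finset.mem_union_right _ ha)
    have hxy1 : (e.symm (x + y)).support ⊆ s := by
      rw [hs]; intro a ha; exact Finset.mem_union_right _ ha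
    rw [key s x hx1, key s y hy1, key s (x + y) hxy1, ← Finset.sum_add_distrib]
    refine Finset.sum_congr rfl fun σ _ => ?_
    rw [hp_add, hπ_add, hp_add]
  have hpt_zero : pt 0 = 0 := by
    have h := hpt_add 0 0
    rw [add_zero] at h
    have h2 : pt 0 + pt 0 = pt 0 + 0 := by rw [add_zero]; exact h.symm
    exact add_left_cancel h2
  -- `pt` maps into `N`, is the identity on `N`, commutes with projections and scalars
  have hpσ_memN : ∀ (σ : GArrow G) (n : M), n ∈ N → p σ n ∈ N := by
    intro σ n hn
    have hn' : n ∈ ⨆ τ : GArrow G, (N ⊓ gm.component τ) := by rw [← hN.2]; exact hn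
    refine AddSubgroup.iSup_induction (x := n) _ hn' ?_ ?_ ?_
    · intro τ x hx
      by_cases hτσ : τ = σ
      · subst hτσ; rw [hp_eq _ _ hx.2]; exact hx.1
      · rw [hp_ne _ _ _ hx.2 hτσ]; exact N.zero_mem
    · rw [hp_zero]; exact N.zero_mem
    · intro x y hx hy; rw [hp_add]; exact N.add_mem hx hy
  have hpt_memN : ∀ m : M, pt m ∈ N := by
    refine hind _ ?_ ?_ ?_
    · intro σ x hx
      rw [hpt_hom σ x hx]
      exact hpσ_memN σ _ (hπ_memN x)
    · rw [hpt_zero]; exact N.zero_mem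
    · intro x y hx hy; rw [hpt_add]; exact N.add_mem hx hy
  have hpt_id : ∀ n ∈ N, pt n = n := by
    intro n hn
    have hn' : n ∈ ⨆ τ : GArrow G, (N ⊓ gm.component τ) := by rw [← hN.2]; exact hn
    refine AddSubgroup.iSup_induction (x := n) _ hn' ?_ ?_ ?_
    · intro τ x hx
      rw [hpt_hom τ x hx.2, hπ_left x hx.1, hp_eq _ _ hx.2]
    · exact hpt_zero
    · intro x y hx hy; rw [hpt_add, hx, hy]
  have hpt_p : ∀ (σ : GArrow G) (m : M), p σ (pt m) = pt (p σ m) := by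
    intro σ
    refine hind _ ?_ ?_ ?_
    · intro τ x hx
      by_cases hτσ : τ = σ
      · subst hτσ
        have h1 : pt x ∈ gm.component τ := hpt_hom τ x hx ▸ hp_mem τ (π x)
        rw [hp_eq _ _ h1, hp_eq _ _ hx]
      · have h1 : pt x ∈ gm.component τ := hpt_hom τ x hx ▸ hp_mem τ (π x)
        rw [hp_ne _ _ _ h1 hτσ, hp_ne _ _ _ hx hτσ, hpt_zero]
    · rw [hpt_zero, hp_zero, hpt_zero]
    · intro x y hx hy
      rw [hpt_add, hp_add, hx, hy, hp_add, hpt_add]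
  have hpt_smul : ∀ (r : R) (m : M), pt (r • m) = r • pt m := by
    intro r m
    refine hind (fun m => ∀ r : R, pt (r • m) = r • pt m) ?_ ?_ ?_ m r
    · intro σ x hx r
      refine hindR (fun r => pt (r • x) = r • pt x) ?_ ?_ ?_ r
      · intro ρ s hs
        by_cases hcomp : GArrow.Composable ρ σ
        · rw [hpt_hom σ x hx,
            hpt_hom (GArrow.comp ρ σ hcomp) (s • x) (gm.smul_mem ρ σ hcomp s hs x hx),
            hπ_smul, hp_smul ρ σ hcomp s hs]
        · rw [gm.smul_eq_zero ρ σ hcomp s hs x hx, hpt_zero,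
            hpt_hom σ x hx,
            gm.smul_eq_zero ρ σ hcomp s hs _ (hp_mem σ (π x))]
      · show pt ((0 : R) • x) = (0 : R) • pt x
        rw [zero_smul', hpt_zero, zero_smul']
      · intro s t hs ht
        rw [gm.add_smul, hpt_add, hs, ht, gm.add_smul]
    · intro r; rw [smul_zero', hpt_zero, smul_zero']
    · intro x y hx hy r
      rw [gm.smul_add, hpt_add, hx r, hy r, hpt_add, gm.smul_add]
  -- the graded complement
  set C : AddSubgroup M :=
    { carrier := {m | pt m = 0}
      add_mem' := by intro a b ha hb; simp only [Set.mem_setOf_eq] at *; rw [hpt_add, ha, hb, add_zero]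
      zero_mem' := hpt_zero
      neg_mem' := by
        intro a ha
        simp only [Set.mem_setOf_eq] at *
        have h := hpt_add a (-a)
        rw [add_neg_cancel, hpt_zero, ha, zero_add] at h
        exact h.symm } with hCdef
  have hmemC : ∀ m : M, m ∈ C ↔ pt m = 0 := fun m => Iff.rfl
  refine ⟨C, ⟨?_, ?_⟩, ?_, ?_⟩
  · -- C is closed under the R-action
    intro r m hm
    rw [hmemC] at hm ⊢
    rw [hpt_smul, hm, smul_zero']
  · -- C is graded
    apply le_antisymm
    · intro m hm
      rw [hmemC] at hm
      have : m = ∑ σ ∈ (e.symm m).support, p σ m := (hp_sum m).symm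
      rw [this]
      refine AddSubgroup.sum_mem _ fun σ _ => ?_
      refine AddSubgroup.mem_iSup_of_mem σ ?_
      refine AddSubgroup.mem_inf.mpr ⟨?_, hp_mem σ m⟩
      rw [hmemC, ← hpt_p, hm, hp_zero]
    · refine iSup_le fun σ => ?_
      exact inf_le_left
  · -- N ⊓ C = ⊥
    rw [eq_bot_iff]
    intro m hm
    obtain ⟨hmN, hmC⟩ := AddSubgroup.mem_inf.mp hm
    rw [hmemC] at hmC
    have := hpt_id m hmN
    rw [hmC] at this
    simpa using this.symm
  · -- N ⊔ C = ⊤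
    rw [eq_top_iff]
    intro m _
    have h1 : pt m ∈ N := hpt_memN m
    have h2 : m - pt m ∈ C := by
      rw [hmemC]
      have h := hpt_add (m - pt m) (pt m)
      rw [sub_add_cancel, hpt_id _ h1] at h
      -- h : pt m = pt (m - pt m) + pt m
      have h' : pt (m - pt m) + pt m = 0 + pt m := by rw [zero_add]; exact h.symm
      exact add_right_cancel h'
    have h3 := AddSubgroup.add_mem_sup h1 h2
    rwa [add_comm, sub_add_cancel] at h3
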